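/- arXiv:2605.01565 — 2 statements merged into one kernel-verified Lean document; each statement's English description precedes it below -/
import Mathlib

section
/- Every vertex x of G₂ with Z(x) = {1,…,m−1} has open neighborhood exactly X_{{m}}, the class of vertices whose zero-set is {m}; in particular, all minimum-degree vertices of G₂ share the same open neighborhood. -/
open Finset

abbrev NN (m : ℕ) (p : Fin m → ℕ) : ℕ := ∏ i, p i

abbrev Vtx (m : ℕ) (p : Fin m → ℕ) : Type :=
  {x : ZMod (NN m p) // x ≠ 0 ∧ ¬ IsUnit x}

/-- The induced subgraph `G₂` of the comaximal graph of `ℤ/nℤ` on nonzero nonunits. -/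
def G2 (m : ℕ) (p : Fin m → ℕ) : SimpleGraph (Vtx m p) where
  Adj x y := x ≠ y ∧ Ideal.span ({x.1, y.1} : Set (ZMod (NN m p))) = ⊤
  symm := by
    constructor
    rintro x y ⟨hxy, h⟩
    exact ⟨hxy.symm, by rwa [Set.pair_comm]⟩
  loopless := by constructor; rintro x ⟨h, -⟩; exact h rfl

/-- The zero-set of `x`: indices `i` where the image of `x` in `ℤ/p_iℤ` is zero. -/
def Z (m : ℕ) (p : Fin m → ℕ) (x : ZMod (NN m p)) : Finset (Fin m) :=
  Finset.univ.filter fun i =>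
    (ZMod.castHom (Finset.dvd_prod_of_mem p (Finset.mem_univ i)) (ZMod (p i))) x = 0

/-- The class `X_S` of vertices of `G₂` with zero-set `S`. -/
def XS (m : ℕ) (p : Fin m → ℕ) (S : Finset (Fin m)) : Set (Vtx m p) :=
  {x | Z m p x.1 = S}

section Aux

variable (m : ℕ) (p : Fin m → ℕ) (hp : ∀ i, (p i).Prime) (hmono : StrictMono p)

lemma mem_Z_iff (x : ZMod (NN m p)) (i : Fin m) :
    i ∈ Z m p x ↔
      (ZMod.castHom (Finset.dvd_prod_of_mem p (Finset.mem_univ i)) (ZMod (p i))) x = 0 := by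
  unfold Z; exact Finset.mem_filter.trans (and_iff_right (Finset.mem_univ _))

noncomputable def crt (hp : ∀ i, (p i).Prime) (hmono : StrictMono p) :
    ZMod (NN m p) ≃+* Π i, ZMod (p i) :=
  ZMod.prodEquivPi p (fun i j hij =>
    (Nat.coprime_primes (hp i) (hp j)).mpr fun h => hij (hmono.injective h))

lemma crt_apply (x : ZMod (NN m p)) (i : Fin m) :
    crt m p hp hmono x i =
      (ZMod.castHom (Finset.dvd_prod_of_mem p (Finset.mem_univ i)) (ZMod (p i))) x := by
  have : (Pi.evalRingHom (fun i => ZMod (p i)) i).comp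
      ((crt m p hp hmono : ZMod (NN m p) ≃+* Π i, ZMod (p i)) : ZMod (NN m p) →+* Π i, ZMod (p i))
      = ZMod.castHom (Finset.dvd_prod_of_mem p (Finset.mem_univ i)) (ZMod (p i)) :=
    Subsingleton.elim _ _
  exact RingHom.congr_fun this x

/-- spanning pair is top iff at every prime at least one coordinate is nonzero -/
lemma span_pair_top_iff (a b : ZMod (NN m p)) :
    Ideal.span ({a, b} : Set (ZMod (NN m p))) = ⊤ ↔
      ∀ i, crt m p hp hmono a i ≠ 0 ∨ crt m p hp hmono b i ≠ 0 := by
  haveI : ∀ i, Fact (p i).Prime := fun i => ⟨hp i⟩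
  set e := crt m p hp hmono with he
  rw [Ideal.eq_top_iff_one, Ideal.mem_span_pair]
  constructor
  · rintro ⟨u, v, huv⟩ i
    by_contra h
    push_neg at h
    have := congrFun (congrArg e huv) i
    simp only [map_add, map_mul, map_one, Pi.add_apply, Pi.mul_apply, Pi.one_apply,
      h.1, h.2, mul_zero, add_zero] at this
    exact zero_ne_one this
  · intro h
    refine ⟨e.symm (fun i => if e a i = 0 then 0 else (e a i)⁻¹),
      e.symm (fun i => if e a i = 0 then (e b i)⁻¹ else 0), ?_⟩
    apply e.injective
    rw [map_add, map_mul, map_mul, map_one, e.apply_symm_apply, e.apply_symm_apply]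
    funext i
    simp only [Pi.add_apply, Pi.mul_apply, Pi.one_apply]
    by_cases ha : e a i = 0
    · have hb : e b i ≠ 0 := (h i).resolve_left (by simpa using ha)
      simp [ha, inv_mul_cancel₀ hb]
    · simp [ha, inv_mul_cancel₀ ha]

lemma not_isUnit_exists (y : ZMod (NN m p)) (hy : ¬ IsUnit y) :
    ∃ i, crt m p hp hmono y i = 0 := by
  haveI : ∀ i, Fact (p i).Prime := fun i => ⟨hp i⟩
  set e := crt m p hp hmono with he
  by_contra h
  push_neg at h
  apply hy
  apply IsUnit.of_mul_eq_one (a := y) (e.symm (fun i => (e y i)⁻¹))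
  apply e.injective
  rw [map_mul, e.apply_symm_apply, map_one]
  funext i
  simp [mul_inv_cancel₀ (h i)]

end Aux

theorem stmt8 (m : ℕ) (hm : 2 ≤ m) (p : Fin m → ℕ) (hp : ∀ i, (p i).Prime)
    (hmono : StrictMono p) (x : Vtx m p)
    (hx : Z m p x.1 = Finset.univ.erase (⟨m - 1, by omega⟩ : Fin m)) :
    (G2 m p).neighborSet x = XS m p {(⟨m - 1, by omega⟩ : Fin m)} := by
  set l : Fin m := (⟨m - 1, by omega⟩ : Fin m) with hl
  set e := crt m p hp hmono with he
  -- x's coordinates: zero away from l, nonzero at l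
  have hxl : e x.1 l ≠ 0 := by
    rw [crt_apply]
    intro h
    have hmem : l ∈ Z m p x.1 := (mem_Z_iff m p x.1 l).mpr h
    rw [hx] at hmem
    exact (Finset.notMem_erase l _) hmem
  have hxi : ∀ i : Fin m, i ≠ l → e x.1 i = 0 := by
    intro i hi
    rw [crt_apply, ← mem_Z_iff, hx]
    simp [hi]
  ext y
  simp only [SimpleGraph.mem_neighborSet, G2, XS, Set.mem_setOf_eq]
  constructor
  · rintro ⟨hxy, hspan⟩
    rw [span_pair_top_iff m p hp hmono] at hspan
    have hsub : Z m p y.1 ⊆ {l} := by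
      intro i hi
      rw [mem_Z_iff, ← crt_apply m p hp hmono] at hi
      rcases hspan i with h | h
      · rw [Finset.mem_singleton]
        by_contra hil
        exact h (hxi i hil)
      · exact absurd hi h
    obtain ⟨i, hi⟩ := not_isUnit_exists m p hp hmono y.1 y.2.2
    have hiZ : i ∈ Z m p y.1 := by
      rw [mem_Z_iff, ← crt_apply m p hp hmono]; exact hi
    have hil : i = l := Finset.mem_singleton.mp (hsub hiZ)
    apply Finset.Subset.antisymm hsub
    intro j hj
    rw [Finset.mem_singleton] at hj
    subst hj; rw [← hil]; exact hiZ
  · intro hZy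
    have hyl : e y.1 l = 0 := by
      rw [crt_apply, ← mem_Z_iff, hZy]; simp
    have hyi : ∀ i : Fin m, i ≠ l → e y.1 i ≠ 0 := by
      intro i hi
      rw [crt_apply]
      intro h
      have hmem : i ∈ Z m p y.1 := (mem_Z_iff m p y.1 i).mpr h
      rw [hZy] at hmem
      exact hi (Finset.mem_singleton.mp hmem)
    constructor
    · intro h
      rw [h, hZy] at hx
      have : l ∈ ({l} : Finset (Fin m)) := Finset.mem_singleton_self l
      rw [hx] at this
      exact (Finset.notMem_erase l _) this
    · rw [span_pair_top_iff m p hp hmono]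
      intro i
      by_cases hi : i = l
      · subst hi; exact Or.inl hxl
      · exact Or.inr (hyi i hi)
end

section
/- Assume m ≥ 3. The class X_{{m}} is a vertex cut of G₂; that is, deleting all vertices of X_{{m}} from G₂ yields a disconnected graph. Consequently κ(G₂) ≤ |X_{{m}}| = ∏_{i=1}^{m−1} (p_i − 1). -/
open Finset

/-- Vertex connectivity: the minimum size of a set of vertices whose deletion
leaves a disconnected graph. -/
noncomputable def kappa {V : Type*} (G : SimpleGraph V) : ℕ :=
  sInf {k | ∃ W : Set V, W.ncard = k ∧ ¬ (G.induce Wᶜ).Connected}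

section Aux

variable (m : ℕ) (p : Fin m → ℕ)

theorem cop (hp : ∀ i, (p i).Prime) (hmono : StrictMono p) :
    Pairwise (Function.onFun Nat.Coprime p) := fun i j h =>
  (Nat.coprime_primes (hp i) (hp j)).mpr (fun e => h (hmono.injective e))

noncomputable def E (hp : ∀ i, (p i).Prime) (hmono : StrictMono p) :
    ZMod (NN m p) ≃+* Π i, ZMod (p i) :=
  ZMod.prodEquivPi p (cop m p hp hmono)

variable (hp : ∀ i, (p i).Prime) (hmono : StrictMono p)

theorem castHom_eq (x : ZMod (NN m p)) (i : Fin m) :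
    (ZMod.castHom (Finset.dvd_prod_of_mem p (Finset.mem_univ i)) (ZMod (p i))) x
      = E m p hp hmono x i := by
  have h : (Pi.evalRingHom (fun i => ZMod (p i)) i).comp
      (E m p hp hmono : ZMod (NN m p) →+* Π i, ZMod (p i))
      = ZMod.castHom (Finset.dvd_prod_of_mem p (Finset.mem_univ i)) (ZMod (p i)) :=
    RingHom.ext_zmod _ _
  exact (congrFun (congrArg _ h) x).symm

theorem memZ (x : ZMod (NN m p)) (i : Fin m) :
    i ∈ Z m p x ↔ E m p hp hmono x i = 0 := by
  rw [Z, Finset.mem_filter, castHom_eq m p hp hmono]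
  simp

theorem unit_of_ne (x : ZMod (NN m p)) (h : ∀ i, E m p hp hmono x i ≠ 0) :
    IsUnit x := by
  haveI : ∀ i, Fact (p i).Prime := fun i => ⟨hp i⟩
  have hu : IsUnit (E m p hp hmono x) := by
    refine IsUnit.of_mul_eq_one (fun i => (E m p hp hmono x i)⁻¹) (funext fun i => ?_)
    exact mul_inv_cancel₀ (h i)
  have := hu.map (E m p hp hmono).symm.toRingHom
  simpa using this

theorem nonunit_exists (x : ZMod (NN m p)) (h : ¬ IsUnit x) :
    ∃ i, E m p hp hmono x i = 0 := by
  by_contra hc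
  push_neg at hc
  exact h (unit_of_ne m p hp hmono x hc)

theorem adj_not_both {x y : ZMod (NN m p)}
    (h : Ideal.span ({x, y} : Set (ZMod (NN m p))) = ⊤) (i : Fin m)
    (hx : E m p hp hmono x i = 0) (hy : E m p hp hmono y i = 0) : False := by
  haveI : Fact (p i).Prime := ⟨hp i⟩
  have h1 : (1 : ZMod (NN m p)) ∈ Ideal.span ({x, y} : Set (ZMod (NN m p))) := by
    rw [h]; trivial
  obtain ⟨a, b, hab⟩ := Ideal.mem_span_pair.mp h1
  have := congrArg (fun z => E m p hp hmono z i) hab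
  simp only [map_add, map_mul, map_one, Pi.add_apply, Pi.mul_apply, Pi.one_apply,
    hx, hy, mul_zero, add_zero] at this
  exact zero_ne_one this

/-- a vertex built from prescribed coordinates -/
theorem mkVtx (v : Π i, ZMod (p i)) (i₀ i₁ : Fin m) (h0 : v i₀ = 0) (h1 : v i₁ ≠ 0) :
    (E m p hp hmono).symm v ≠ 0 ∧ ¬ IsUnit ((E m p hp hmono).symm v) := by
  haveI : ∀ i, Fact (p i).Prime := fun i => ⟨hp i⟩
  constructor
  · intro hz
    apply h1
    have : v = E m p hp hmono ((E m p hp hmono).symm v) := ((E m p hp hmono).apply_symm_apply v).symm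
    rw [this, hz, map_zero]
    rfl
  · intro hu
    have hu2 : IsUnit (E m p hp hmono ((E m p hp hmono).symm v)) :=
      hu.map (E m p hp hmono).toRingHom
    rw [(E m p hp hmono).apply_symm_apply] at hu2
    have := (hu2.map (Pi.evalRingHom (fun i => ZMod (p i)) i₀))
    simp only [Pi.evalRingHom_apply, h0] at this
    exact not_isUnit_zero this

end Aux


theorem stmt9 (m : ℕ) (hm : 3 ≤ m) (p : Fin m → ℕ) (hp : ∀ i, (p i).Prime)
    (hmono : StrictMono p) :
    ¬ ((G2 m p).induce (XS m p {(⟨m - 1, by omega⟩ : Fin m)})ᶜ).Connected ∧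
    kappa (G2 m p) ≤ (XS m p {(⟨m - 1, by omega⟩ : Fin m)}).ncard ∧
    (XS m p {(⟨m - 1, by omega⟩ : Fin m)}).ncard = ∏ i ∈ Finset.univ.erase (⟨m - 1, by omega⟩ : Fin m), (p i - 1) := by
  haveI : ∀ i, Fact (p i).Prime := fun i => ⟨hp i⟩
  set μ : Fin m := ⟨m - 1, by omega⟩ with hμ
  set e := E m p hp hmono with he
  -- coordinate vectors
  set v : Π i, ZMod (p i) := fun i => if i = μ then 1 else 0 with hv
  set w : Π i, ZMod (p i) := fun i => if i = (⟨0, by omega⟩ : Fin m) then 0 else 1 with hw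
  have h0μ : (⟨0, by omega⟩ : Fin m) ≠ μ := by
    intro h; rw [Fin.ext_iff] at h; rw [hμ] at h; simp at h; omega
  have h1μ : (⟨1, by omega⟩ : Fin m) ≠ μ := by
    intro h; rw [Fin.ext_iff] at h; rw [hμ] at h; simp at h; omega
  have h10 : (⟨1, by omega⟩ : Fin m) ≠ (⟨0, by omega⟩ : Fin m) := by
    intro h; rw [Fin.ext_iff] at h; simp at h
  -- x₀ : the vertex whose only nonzero coordinate is μ
  obtain ⟨hx0ne, hx0nu⟩ := mkVtx m p hp hmono v ⟨0, by omega⟩ μ (by simp [hv, h0μ]) (by simp [hv])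
  obtain ⟨hy0ne, hy0nu⟩ := mkVtx m p hp hmono w ⟨0, by omega⟩ μ (by simp [hw])
    (by simp [hw, h0μ.symm, (Ne.symm h0μ)])
  set x₀ : Vtx m p := ⟨e.symm v, hx0ne, hx0nu⟩ with hx₀
  set y₀ : Vtx m p := ⟨e.symm w, hy0ne, hy0nu⟩ with hy₀
  have hex : e x₀.1 = v := e.apply_symm_apply v
  have hey : e y₀.1 = w := e.apply_symm_apply w
  -- x₀, y₀ are not in XS {μ}
  have hx₀mem : x₀ ∈ (XS m p {μ})ᶜ := by
    intro hZ
    have h0 : (⟨0, by omega⟩ : Fin m) ∈ Z m p x₀.1 := by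
      rw [memZ m p hp hmono, hex]; simp [hv, h0μ]
    rw [hZ] at h0
    exact h0μ (Finset.mem_singleton.mp h0)
  have hy₀mem : y₀ ∈ (XS m p {μ})ᶜ := by
    intro hZ
    have h0 : μ ∉ Z m p y₀.1 := by
      rw [memZ m p hp hmono, hey]; simp [hw, Ne.symm h0μ]
    rw [hZ] at h0
    exact h0 (Finset.mem_singleton.mpr rfl)
  -- disconnection
  have hdisc : ¬ ((G2 m p).induce (XS m p {μ})ᶜ).Connected := by
    intro hcon
    have hreach := hcon.preconnected ⟨x₀, hx₀mem⟩ ⟨y₀, hy₀mem⟩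
    obtain ⟨wlk⟩ := hreach
    have hxyne : x₀ ≠ y₀ := by
      intro h
      have hvw : v = w := by rw [← hex, ← hey, h]
      have h1 := congrFun hvw ⟨1, by omega⟩
      simp [hv, hw, h1μ, h10] at h1
    have hvne : (⟨x₀, hx₀mem⟩ : ((XS m p {μ})ᶜ : Set (Vtx m p))) ≠ ⟨y₀, hy₀mem⟩ := by
      intro h
      exact hxyne (congrArg Subtype.val h)
    have hnn := SimpleGraph.Walk.not_nil_of_ne hvne (p := wlk)
    have hadj0 := wlk.adj_snd hnn
    set b := wlk.getVert 1 with hb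
    · have hadj : (G2 m p).Adj x₀ b.1 := hadj0
      obtain ⟨-, hspan⟩ := hadj
      -- b's zero set is {μ}
      apply b.2
      show Z m p b.1.1 = {μ}
      have hbz : ∀ i, i ≠ μ → e b.1.1 i ≠ 0 := by
        intro i hiμ hbi
        exact adj_not_both m p hp hmono hspan i (by rw [hex]; simp [hv, hiμ]) hbi
      obtain ⟨j, hj⟩ := nonunit_exists m p hp hmono b.1.1 b.1.2.2
      have hjμ : j = μ := by
        by_contra hc; exact hbz j hc hj
      ext i
      rw [memZ m p hp hmono, Finset.mem_singleton]
      constructor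
      · intro hi; by_contra hc; exact hbz i hc hi
      · intro hi; rw [hi]; exact hjμ ▸ hj
  refine ⟨hdisc, Nat.sInf_le ⟨XS m p {μ}, rfl, hdisc⟩, ?_⟩
  -- counting
  have key : ∀ x : ZMod (NN m p), (Z m p x = {μ}) ↔ ∀ i, (e x i = 0 ↔ i = μ) := by
    intro x
    rw [Finset.ext_iff]
    apply forall_congr'
    intro i
    rw [memZ m p hp hmono, Finset.mem_singleton]
  have eqv : (XS m p {μ} : Set (Vtx m p)) ≃
      {u : Π i, ZMod (p i) // ∀ i, (u i = 0 ↔ i = μ)} := by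
    refine ⟨fun x => ⟨e x.1.1, (key x.1.1).mp x.2⟩, fun u => ⟨⟨e.symm u.1, ?_⟩, ?_⟩, ?_, ?_⟩
    · exact mkVtx m p hp hmono u.1 μ ⟨0, by omega⟩ ((u.2 μ).mpr rfl)
        (fun h => h0μ ((u.2 _).mp h))
    · show Z m p (e.symm u.1) = {μ}
      refine (key _).mpr (fun i => ?_)
      rw [e.apply_symm_apply]
      exact u.2 i
    · intro x
      exact Subtype.ext (Subtype.ext (e.symm_apply_apply x.1.1))
    · intro u
      exact Subtype.ext (e.apply_symm_apply u.1)
  have hfac : ∀ i : Fin m, Nat.card {a : ZMod (p i) // a = 0 ↔ i = μ}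
      = if i = μ then 1 else p i - 1 := by
    intro i
    by_cases hi : i = μ
    · rw [if_pos hi]
      haveI : Unique {a : ZMod (p i) // a = 0 ↔ i = μ} :=
        ⟨⟨⟨0, by simp [hi]⟩⟩, fun b => Subtype.ext (b.2.mpr hi)⟩
      exact Nat.card_unique
    · rw [if_neg hi]
      have hequiv : {a : ZMod (p i) // a = 0 ↔ i = μ} ≃ {a : ZMod (p i) // ¬ a = 0} :=
        Equiv.subtypeEquivRight (fun a => by simp [hi])
      rw [Nat.card_congr hequiv, Nat.card_eq_fintype_card,
        Fintype.card_subtype_compl, ZMod.card, Fintype.card_subtype_eq]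
  calc (XS m p {μ}).ncard
      = Nat.card (XS m p {μ} : Set (Vtx m p)) := (Nat.card_coe_set_eq _).symm
    _ = Nat.card {u : Π i, ZMod (p i) // ∀ i, (u i = 0 ↔ i = μ)} := Nat.card_congr eqv
    _ = Nat.card (Π i, {a : ZMod (p i) // a = 0 ↔ i = μ}) :=
        Nat.card_congr (Equiv.subtypePiEquivPi (p := fun i a => a = 0 ↔ i = μ))
    _ = ∏ i, Nat.card {a : ZMod (p i) // a = 0 ↔ i = μ} := Nat.card_pi
    _ = ∏ i, (if i = μ then 1 else p i - 1) := Finset.prod_congr rfl (fun i _ => hfac i)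
    _ = ∏ i ∈ Finset.univ.erase μ, (p i - 1) := by
        rw [← Finset.mul_prod_erase Finset.univ _ (Finset.mem_univ μ), if_pos rfl, one_mul]
        exact Finset.prod_congr rfl (fun i hi => if_neg (Finset.ne_of_mem_erase hi))
end
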